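/- If P(t) = Σ_{j=0}^{n} α_j t^j is a polynomial with real coefficients such that Σ_j α_j C_{j+k} = 0 for all k ≥ 0 (equivalently, for k = 0, 1, …, n), then P = 0. -/

import Mathlib

open Filter Finset

noncomputable def fseq (i m : ℕ) : ℝ :=
  (catalan m : ℝ) / ∏ l ∈ Finset.range i, ((m + l + 2 : ℕ) : ℝ)

lemma catalan_pos' (m : ℕ) : 0 < catalan m := by
  by_contra h
  have h0 : catalan m = 0 := by omega
  have := succ_mul_catalan_eq_centralBinom m
  rw [h0, mul_zero] at this
  exact absurd this.symm (Nat.ne_of_gt (Nat.centralBinom_pos m))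

lemma prodpos (i m : ℕ) : (0:ℝ) < ∏ l ∈ Finset.range i, ((m + l + 2 : ℕ) : ℝ) := by
  apply Finset.prod_pos
  intro l _
  positivity

lemma fpos (i m : ℕ) : 0 < fseq i m := by
  unfold fseq
  have := catalan_pos' m
  have := prodpos i m
  positivity

lemma fdrop (i m : ℕ) : fseq (i+1) m = fseq i m / ((m:ℝ) + i + 2) := by
  unfold fseq
  rw [Finset.prod_range_succ, div_div]
  push_cast
  ring_nf

lemma catrec (m : ℕ) : ((m:ℝ) + 2) * catalan (m+1) = (4*m+2) * catalan m := by
  have a := succ_mul_catalan_eq_centralBinom m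
  have b := succ_mul_catalan_eq_centralBinom (m+1)
  have c := Nat.succ_mul_centralBinom_succ m
  have a' : ((m:ℝ)+1) * catalan m = Nat.centralBinom m := by exact_mod_cast congrArg (Nat.cast : ℕ → ℝ) a
  have b' : ((m:ℝ)+2) * catalan (m+1) = Nat.centralBinom (m+1) := by
    have := congrArg (Nat.cast : ℕ → ℝ) b; push_cast at this; linarith
  have c' : ((m:ℝ)+1) * Nat.centralBinom (m+1) = 2*(2*(m:ℝ)+1) * Nat.centralBinom m := by
    have := congrArg (Nat.cast : ℕ → ℝ) c; push_cast at this; linarith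
  have hm1 : ((m:ℝ)+1) ≠ 0 := by positivity
  apply mul_left_cancel₀ hm1
  linear_combination ((m:ℝ)+1) * b' + c' - (4*(m:ℝ)+2) * a' 

lemma prodshift (i m : ℕ) : (m+2) * ∏ l ∈ Finset.range i, (m + 1 + l + 2) =
    (m + i + 2) * ∏ l ∈ Finset.range i, (m + l + 2) := by
  have h1 : ∏ l ∈ Finset.range (i+1), (m + l + 2) =
      (∏ l ∈ Finset.range i, (m + (l+1) + 2)) * (m + 0 + 2) := Finset.prod_range_succ' _ _
  have h2 : ∏ l ∈ Finset.range (i+1), (m + l + 2) =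
      (∏ l ∈ Finset.range i, (m + l + 2)) * (m + i + 2) := Finset.prod_range_succ _ _
  have h3 : ∏ l ∈ Finset.range i, (m + (l+1) + 2) = ∏ l ∈ Finset.range i, (m + 1 + l + 2) := by
    apply Finset.prod_congr rfl; intro l _; ring_nf
  rw [h3] at h1
  rw [mul_comm, ← h1, h2]
  ring

lemma fsucc (i m : ℕ) : fseq i (m+1) = ((4*(m:ℝ)+2) / ((m:ℝ) + i + 2)) * fseq i m := by
  unfold fseq
  have hA := (prodpos i m).ne'
  have hB := (prodpos i (m+1)).ne'
  have hd : ((m:ℝ) + i + 2) ≠ 0 := by positivity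
  have hp : ((m:ℝ)+2) * ∏ l ∈ Finset.range i, ((m + 1 + l + 2 : ℕ) : ℝ) =
      ((m:ℝ) + i + 2) * ∏ l ∈ Finset.range i, ((m + l + 2 : ℕ) : ℝ) := by
    exact_mod_cast congrArg (Nat.cast : ℕ → ℝ) (prodshift i m)
  have hc := catrec m
  have hm2 : ((m:ℝ)+2) ≠ 0 := by positivity
  field_simp
  push_cast at hp hc ⊢
  linear_combination (-(catalan (m+1):ℝ)) * hp + (∏ x ∈ Finset.range i, ((m:ℝ) + 1 + (x:ℝ) + 2)) * hc

lemma fstep (i m : ℕ) : fseq i (m+1) - 4 * fseq i m = -(4*(i:ℝ)+6) * fseq (i+1) m := by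
  rw [fsucc, fdrop]
  have hd : ((m:ℝ)+i+2) ≠ 0 := by positivity
  field_simp
  ring

lemma ratio_tendsto (c d : ℝ) :
    Tendsto (fun m : ℕ => (4*(m:ℝ)+c)/((m:ℝ)+d)) atTop (nhds 4) := by
  have h0 : Tendsto (fun m : ℕ => (c-4*d)/((m:ℝ)+d)) atTop (nhds 0) :=
    tendsto_const_nhds.div_atTop
      (tendsto_atTop_add_const_right atTop d tendsto_natCast_atTop_atTop)
  have h1 := h0.const_add 4
  rw [add_zero] at h1
  apply h1.congr'
  filter_upwards [tendsto_natCast_atTop_atTop.eventually_gt_atTop (-d)] with m hm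
  have hne : (m:ℝ) + d ≠ 0 := by linarith
  field_simp
  ring

lemma fratio (i m : ℕ) : fseq i (m+1) / fseq i m = (4*(m:ℝ)+2)/((m:ℝ)+i+2) := by
  rw [fsucc, mul_div_assoc, div_self (fpos i m).ne', mul_one]

lemma tendsto_fratio (i j : ℕ) :
    Tendsto (fun k : ℕ => fseq i (j+k) / fseq i k) atTop (nhds (4^j)) := by
  induction j with
  | zero =>
    simp only [Nat.zero_add, pow_zero]
    have : (fun k : ℕ => fseq i k / fseq i k) = fun _ => (1:ℝ) := by
      funext k; exact div_self (fpos i k).ne'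
    rw [this]
    exact tendsto_const_nhds
  | succ j hj =>
    have key : ∀ k : ℕ, fseq i (j+1+k) / fseq i k =
        ((4*(k:ℝ)+(4*(j:ℝ)+2))/((k:ℝ)+((j:ℝ)+(i:ℝ)+2))) * (fseq i (j+k) / fseq i k) := by
      intro k
      have h1 : j+1+k = (j+k)+1 := by omega
      rw [h1, ← div_mul_div_cancel₀ (b := fseq i (j+k)) (fpos i (j+k)).ne' (a := fseq i ((j+k)+1)) (c := fseq i k), fratio]
      congr 1
      push_cast
      ring_nf
    have ht : Tendsto (fun k : ℕ =>
        ((4*(k:ℝ)+(4*(j:ℝ)+2))/((k:ℝ)+((j:ℝ)+(i:ℝ)+2))) * (fseq i (j+k) / fseq i k))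
        atTop (nhds (4 * 4^j)) := (ratio_tendsto (4*(j:ℝ)+2) ((j:ℝ)+(i:ℝ)+2)).mul hj
    have : (4:ℝ) * 4^j = 4^(j+1) := by ring
    rw [this] at ht
    exact ht.congr (fun k => (key k).symm)

lemma root_sum (N i : ℕ) (β : ℕ → ℝ)
    (h : ∀ k, ∑ j ∈ Finset.range N, β j * fseq i (j+k) = 0) :
    ∑ j ∈ Finset.range N, β j * (4:ℝ)^j = 0 := by
  have T : Tendsto (fun k : ℕ => ∑ j ∈ Finset.range N, β j * (fseq i (j+k) / fseq i k))
      atTop (nhds (∑ j ∈ Finset.range N, β j * (4:ℝ)^j)) :=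
    tendsto_finset_sum _ (fun j _ => (tendsto_fratio i j).const_mul (β j))
  have E : (fun k : ℕ => ∑ j ∈ Finset.range N, β j * (fseq i (j+k) / fseq i k))
      = fun _ => (0:ℝ) := by
    funext k
    have : ∑ j ∈ Finset.range N, β j * (fseq i (j+k) / fseq i k)
        = (∑ j ∈ Finset.range N, β j * fseq i (j+k)) / fseq i k := by
      rw [Finset.sum_div]
      apply Finset.sum_congr rfl
      intro j _
      rw [mul_div_assoc]
    rw [this, h k, zero_div]
  rw [E] at T
  exact tendsto_nhds_unique T tendsto_const_nhds

lemma main_lemma (n : ℕ) : ∀ (i : ℕ) (β : ℕ → ℝ),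
    (∀ k, ∑ j ∈ Finset.range (n+1), β j * fseq i (j+k) = 0) → ∀ j ≤ n, β j = 0 := by
  induction n with
  | zero =>
    intro i β h j hj
    interval_cases j
    have h0 := h 0
    rw [Finset.sum_range_one] at h0
    rcases mul_eq_zero.mp h0 with h1 | h1
    · exact h1
    · exact absurd h1 (fpos i 0).ne'
  | succ n IH =>
    intro i β hβ
    set γ : ℕ → ℝ := fun j => ∑ t ∈ Finset.Ico (j+1) (n+2), β t * (4:ℝ)^(t-1-j) with hγ
    have hγtop : ∀ j, n+1 ≤ j → γ j = 0 := by
      intro j hj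
      rw [hγ]
      simp only
      rw [Finset.Ico_eq_empty (by omega), Finset.sum_empty]
    have hrec : ∀ j ≤ n, γ j = β (j+1) + 4 * γ (j+1) := by
      intro j hj
      rw [hγ]
      simp only
      rw [Finset.sum_eq_sum_Ico_succ_bot (by omega : j+1 < n+2)]
      have e0 : j+1-1-j = 0 := by omega
      rw [e0, pow_zero, mul_one]
      congr 1
      rw [Finset.mul_sum]
      apply Finset.sum_congr rfl
      intro t ht
      rw [Finset.mem_Ico] at ht
      have e1 : t-1-j = (t-1-(j+1))+1 := by omega
      rw [e1, pow_succ]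
      ring
    have hroot : ∑ j ∈ Finset.range (n+2), β j * (4:ℝ)^j = 0 := root_sum _ i β hβ
    have hβ0 : β 0 = -(4*γ 0) := by
      have h4 : 4 * γ 0 = ∑ t ∈ Finset.Ico 1 (n+2), β t * (4:ℝ)^t := by
        rw [hγ]
        simp only
        rw [Finset.mul_sum]
        apply Finset.sum_congr rfl
        intro t ht
        rw [Finset.mem_Ico] at ht
        have e1 : (4:ℝ)^t = 4^(t-1-0) * 4 := by
          rw [← pow_succ]
          congr 1
          omega
        rw [e1]
        ring
      have h5 : ∑ j ∈ Finset.range (n+2), β j * (4:ℝ)^j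
          = β 0 * 4^0 + ∑ t ∈ Finset.Ico 1 (n+2), β t * (4:ℝ)^t := by
        rw [Finset.range_eq_Ico, Finset.sum_eq_sum_Ico_succ_bot (by omega : 0 < n+2)]
      rw [h5, h4.symm, pow_zero, mul_one] at hroot
      linarith
    have hβj : ∀ j, 1 ≤ j → j ≤ n+1 → β j = γ (j-1) - 4 * γ j := by
      intro j h1 h2
      have := hrec (j-1) (by omega)
      have e1 : j-1+1 = j := by omega
      rw [e1] at this
      linarith
    have key : ∀ k, ∑ j ∈ Finset.range (n+1), γ j * fseq (i+1) (j+k) = 0 := by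
      intro k
      have h1 : (-(4*(i:ℝ)+6)) * ∑ j ∈ Finset.range (n+1), γ j * fseq (i+1) (j+k)
          = ∑ j ∈ Finset.range (n+1), γ j * (fseq i (j+k+1) - 4 * fseq i (j+k)) := by
        rw [Finset.mul_sum]
        apply Finset.sum_congr rfl
        intro j _
        rw [fstep i (j+k)]
        ring
      have e1 : ∑ j ∈ Finset.range (n+2), β j * fseq i (j+k)
          = ∑ j ∈ Finset.range (n+1), β (j+1) * fseq i ((j+1)+k) + β 0 * fseq i (0+k) :=
        Finset.sum_range_succ' _ _
      have e2 : ∑ j ∈ Finset.range (n+2), γ j * fseq i (j+k)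
          = ∑ j ∈ Finset.range (n+1), γ (j+1) * fseq i ((j+1)+k) + γ 0 * fseq i (0+k) :=
        Finset.sum_range_succ' _ _
      have e3 : ∑ j ∈ Finset.range (n+2), γ j * fseq i (j+k)
          = ∑ j ∈ Finset.range (n+1), γ j * fseq i (j+k) + γ (n+1) * fseq i ((n+1)+k) :=
        Finset.sum_range_succ _ _
      have e4 : ∑ j ∈ Finset.range (n+1), β (j+1) * fseq i ((j+1)+k)
          = ∑ j ∈ Finset.range (n+1), (γ j * fseq i ((j+1)+k)
              - 4 * (γ (j+1) * fseq i ((j+1)+k))) := by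
        apply Finset.sum_congr rfl
        intro j hj
        rw [Finset.mem_range] at hj
        rw [hβj (j+1) (by omega) (by omega)]
        have e5 : j+1-1 = j := by omega
        rw [e5]
        ring
      have e6 : ∑ j ∈ Finset.range (n+1), (γ j * fseq i ((j+1)+k)
              - 4 * (γ (j+1) * fseq i ((j+1)+k)))
          = ∑ j ∈ Finset.range (n+1), γ j * fseq i ((j+1)+k)
            - 4 * ∑ j ∈ Finset.range (n+1), γ (j+1) * fseq i ((j+1)+k) := by
        rw [Finset.sum_sub_distrib, Finset.mul_sum]
      have e7 : ∑ j ∈ Finset.range (n+1), γ j * (fseq i (j+k+1) - 4 * fseq i (j+k))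
          = ∑ j ∈ Finset.range (n+1), γ j * fseq i ((j+1)+k)
            - 4 * ∑ j ∈ Finset.range (n+1), γ j * fseq i (j+k) := by
        rw [Finset.mul_sum, ← Finset.sum_sub_distrib]
        apply Finset.sum_congr rfl
        intro j _
        have e8 : j+1+k = j+k+1 := by omega
        rw [e8]
        ring
      have hz := hβ k
      have hγn1 : γ (n+1) = 0 := hγtop (n+1) (by omega)
      rw [e1, e4, e6, hβ0] at hz
      rw [hγn1, zero_mul, add_zero] at e3
      have hfinal : -(4*(i:ℝ)+6) * ∑ j ∈ Finset.range (n+1), γ j * fseq (i+1) (j+k) = 0 := by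
        rw [h1, e7]
        linarith [e2, e3, hz]
      have hne : (-(4*(i:ℝ)+6)) ≠ 0 := by
        have : (0:ℝ) ≤ (i:ℝ) := Nat.cast_nonneg i
        intro hc
        nlinarith
      exact (mul_eq_zero.mp hfinal).resolve_left hne
    have hγ0 : ∀ j ≤ n, γ j = 0 := IH (i+1) γ key
    intro j hj
    rcases Nat.eq_zero_or_pos j with h0 | h1
    · rw [h0, hβ0, hγ0 0 (by omega), mul_zero, neg_zero]
    · rw [hβj j h1 hj]
      have hg1 : γ (j-1) = 0 := hγ0 (j-1) (by omega)
      have hg2 : γ j = 0 := by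
        rcases Nat.lt_or_ge j (n+1) with h2 | h2
        · exact hγ0 j (by omega)
        · exact hγtop j h2
      rw [hg1, hg2, mul_zero, sub_zero]

/-- if P(t) = Σ_{j=0}^n α_j t^j has real coefficients and
Σ_j α_j C_{j+k} = 0 for all k ≥ 0, then P = 0, i.e. all α_j vanish. -/
theorem stmt_14 (n : ℕ) (α : ℕ → ℝ)
    (h : ∀ k : ℕ, ∑ j ∈ Finset.range (n + 1), α j * (catalan (j + k) : ℝ) = 0) :
    ∀ j ≤ n, α j = 0 := by
  apply main_lemma n 0 α
  intro k
  have : ∀ j, fseq 0 (j+k) = (catalan (j+k) : ℝ) := by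
    intro j
    unfold fseq
    rw [Finset.prod_range_zero, div_one]
  calc ∑ j ∈ Finset.range (n+1), α j * fseq 0 (j+k)
      = ∑ j ∈ Finset.range (n+1), α j * (catalan (j+k) : ℝ) := by
        apply Finset.sum_congr rfl; intro j _; rw [this j]
    _ = 0 := h k
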